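/- Let T be a p-string with unique smallest end-marker, w a p-string, and c ∈ Σp a p-symbol occurring in w. Then LF_T(p) lies in the cw-interval if and only if p lies in the w-interval and L_T[p] = fce(cw); hence the cw-interval equals [LF_T(l'')..LF_T(r'')] where l'', r'' are the first and last positions p in the w-interval with L_T[p] = fce(cw). -/

import Mathlib

/-- Symbols of a parameterized string: static symbols `s a` (from Σs) and
parameter symbols `p a` (from Σp). -/
inductive PSym where
  | s : ℕ → PSym
  | p : ℕ → PSym
deriving DecidableEq

/-- Symbols of a p-encoded string: static symbols, finite distances, and ∞. -/
inductive Enc where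
  | s : ℕ → Enc
  | fin : ℕ → Enc
  | inf : Enc
deriving DecidableEq

/-- Order embedding: static symbols < natural numbers < ∞. -/
def Enc.toPair : Enc → ℕ ×ₗ ℕ
  | .s a => toLex (0, a)
  | .fin d => toLex (1, d)
  | .inf => toLex (2, 0)

instance : LinearOrder Enc :=
  LinearOrder.lift' Enc.toPair (by
    rintro (a | a | _) (b | b | _) h <;>
      simp_all [Enc.toPair, toLex_inj, Prod.ext_iff])

/-- Largest position `j < i` (0-based) carrying the same symbol as position `i`. -/
def prevOcc (w : List PSym) (i : ℕ) : Option ℕ :=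
  ((List.range i).filter (fun j => w[j]? = w[i]?)).max?

/-- The p-encoding of position `i` (0-based) of `w`. -/
def pencSym (w : List PSym) (i : ℕ) : Enc :=
  match w[i]? with
  | some (PSym.s a) => Enc.s a
  | some (PSym.p _) =>
    match prevOcc w i with
    | some j => Enc.fin (i - j)
    | none => Enc.inf
  | none => Enc.inf

/-- The p-encoding ⟨w⟩ of a p-string `w`. -/
def penc (w : List PSym) : List Enc :=
  (List.range w.length).map (pencSym w)

/-- Lexicographic (strict) order on p-encoded strings. -/
def lexLt (x y : List Enc) : Prop := List.Lex (· < ·) x y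

def lexLe (x y : List Enc) : Prop := lexLt x y ∨ x = y

/-- Length of the longest common prefix. -/
def lcp {α : Type*} [DecidableEq α] : List α → List α → ℕ
  | a :: x, b :: y => if a = b then lcp x y + 1 else 0
  | _, _ => 0

/-- Number of ∞'s in the longest common prefix of two p-encoded strings. -/
def lcpInf (x y : List Enc) : ℕ := (x.take (lcp x y)).count Enc.inf

/-- Number of distinct p-symbols occurring in `w` (denoted |w|_p). -/
def distinctP (w : List PSym) : ℕ :=
  (w.filterMap (fun s => match s with | PSym.p a => some a | PSym.s _ => none)).dedup.length

/-- For `w` starting with a p-symbol: the rank of `w[1]` among the distinct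
p-symbols of `w[1..h+1]`, where `h+1 = min{|w|, second occurrence of w[1] in w}`. -/
def fceRank (w : List PSym) : ℕ :=
  match w with
  | [] => 0
  | c :: rest => distinctP ((c :: rest).take (min (c :: rest).length (2 + rest.idxOf c)))

/-- The function fce from the paper; `fce ε = $` is modelled as `Enc.s 0`. -/
def fce (w : List PSym) : Enc :=
  match w with
  | [] => Enc.s 0
  | PSym.s a :: _ => Enc.s a
  | w => Enc.fin (fceRank w)


-- basic lemmas
theorem penc_length (u : List PSym) : (penc u).length = u.length := by simp [penc]

theorem penc_getElem (u : List PSym) (i : ℕ) (h : i < u.length) :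
    (penc u)[i]'(by simpa [penc_length]) = pencSym u i := by
  simp [penc]

theorem prevOcc_eq_some_iff {u : List PSym} {i j : ℕ} :
    prevOcc u i = some j ↔ (j < i ∧ u[j]? = u[i]? ∧ ∀ j', j' < i → u[j']? = u[i]? → j' ≤ j) := by
  rw [prevOcc, List.max?_eq_some_iff]
  simp only [List.mem_filter, List.mem_range, decide_eq_true_eq]
  constructor
  · rintro ⟨⟨h1, h2⟩, h3⟩
    exact ⟨h1, h2, fun j' hj1 hj2 => h3 j' ⟨hj1, hj2⟩⟩
  · rintro ⟨h1, h2, h3⟩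
    exact ⟨⟨h1, h2⟩, fun b hb => h3 b hb.1 hb.2⟩

theorem prevOcc_eq_none_iff {u : List PSym} {i : ℕ} :
    prevOcc u i = none ↔ ∀ j, j < i → u[j]? ≠ u[i]? := by
  rw [prevOcc, List.max?_eq_none_iff, List.filter_eq_nil_iff]
  simp

theorem pencSym_fin_le {u : List PSym} {i d : ℕ} (h : pencSym u i = Enc.fin d) : 1 ≤ d ∧ d ≤ i := by
  unfold pencSym at h
  rcases hu : u[i]? with _ | (a | a) <;> rw [hu] at h
  · simp at h
  · simp at h
  · rcases hp : prevOcc u i with _ | j <;> rw [hp] at h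
    · simp at h
    · have := prevOcc_eq_some_iff.1 hp
      simp only [Enc.fin.injEq] at h
      omega

theorem prevOcc_cons_succ (b : PSym) (v : List PSym) (i : ℕ) (hi : i < v.length) :
    prevOcc (b :: v) (i+1) =
      match prevOcc v i with
      | some j => some (j+1)
      | none => if v[i]? = some b then some 0 else none := by
  have hbv : ∀ j : ℕ, (b :: v)[j+1]? = v[j]? := by intro j; simp
  rcases hp : prevOcc v i with _ | j
  · rw [prevOcc_eq_none_iff] at hp
    by_cases hb : v[i]? = some b
    · simp only [hp]
      rw [show prevOcc (b :: v) (i+1) = some 0 from ?_]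
      · simp [hb]
      rw [prevOcc_eq_some_iff]
      refine ⟨Nat.succ_pos i, by simpa [hbv] using hb.symm ▸ rfl, ?_⟩
      · intro j' hj1 hj2
        rcases j' with _ | j''
        · exact le_refl 0
        · rw [hbv, hbv] at hj2
          exact absurd hj2 (hp j'' (by omega))
    · simp only [hp]
      rw [show prevOcc (b :: v) (i+1) = none from ?_]
      · simp [hb]
      rw [prevOcc_eq_none_iff]
      intro j' hj1
      rcases j' with _ | j''
      · simp only [List.getElem?_cons_zero, hbv]
        intro hc; exact hb (by rw [← hc])
      · rw [hbv, hbv]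
        exact hp j'' (by omega)
  · rw [prevOcc_eq_some_iff] at hp
    simp only
    rw [prevOcc_eq_some_iff]
    refine ⟨by omega, by rw [hbv, hbv]; exact hp.2.1, ?_⟩
    intro j' hj1 hj2
    rcases j' with _ | j''
    · omega
    · rw [hbv, hbv] at hj2
      have := hp.2.2 j'' (by omega) hj2
      omega

theorem pencSym_cons_succ_first (b0 : ℕ) (v : List PSym) (i : ℕ)
    (hv : v[i]? = some (PSym.p b0)) (hp : prevOcc v i = none) :
    pencSym (PSym.p b0 :: v) (i+1) = Enc.fin (i+1) := by
  have hbv : (PSym.p b0 :: v)[i+1]? = v[i]? := by simp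
  unfold pencSym
  have hi : i < v.length := by
    by_contra h
    rw [List.getElem?_eq_none (by omega)] at hv; cases hv
  rw [hbv, prevOcc_cons_succ _ v i hi, hv, hp]
  simp

theorem pencSym_cons_succ_other (b : PSym) (v : List PSym) (i : ℕ) (hi : i < v.length)
    (h : ¬ (v[i]? = some b ∧ prevOcc v i = none ∧ ∃ b0, b = PSym.p b0)) :
    pencSym (b :: v) (i+1) = pencSym v i := by
  have hbv : (b :: v)[i+1]? = v[i]? := by simp
  unfold pencSym
  rw [hbv, prevOcc_cons_succ b v i hi]
  rcases hv : v[i]? with _ | (a | a)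
  · simp [List.getElem?_eq_none_iff] at hv; omega
  · rcases prevOcc v i with _ | j <;> simp
  · rcases hp : prevOcc v i with _ | j
    · have hb : ¬ v[i]? = some b := by
        intro hc
        rcases b with x | b1
        · rw [hv] at hc; cases hc
        · exact h ⟨hc, hp, b1, rfl⟩
      rw [hv] at hb
      have : (if PSym.p a = b then some (0:ℕ) else none) = none := by
        rw [if_neg]; intro hc; exact hb (by rw [hc])
      simp [this]
    · simp only
      congr 1
      have := (prevOcc_eq_some_iff.1 hp).1
      omega

theorem prevOcc_zero (u : List PSym) : prevOcc u 0 = none := by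
  simp [prevOcc]

theorem pencSym_zero_s (x : ℕ) (v : List PSym) : pencSym (PSym.s x :: v) 0 = Enc.s x := by
  simp [pencSym]

theorem pencSym_zero_p (b0 : ℕ) (v : List PSym) : pencSym (PSym.p b0 :: v) 0 = Enc.inf := by
  simp [pencSym, prevOcc_zero]

theorem indexOf_min {α : Type*} [DecidableEq α] {a : α} {l : List α} {j : ℕ}
    (h : j < l.idxOf a) : l[j]? ≠ some a := by
  induction l generalizing j with
  | nil => simp
  | cons b t ih =>
    by_cases hb : b = a
    · rw [List.idxOf_cons_eq _ hb] at h; omega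
    · rw [List.idxOf_cons_ne _ hb] at h
      rcases j with _ | j'
      · simpa using hb
      · simpa using ih (by omega)

theorem getElem?_indexOf {α : Type*} [DecidableEq α] {a : α} {l : List α} (h : a ∈ l) :
    l[l.idxOf a]? = some a := by
  have hl : l.idxOf a < l.length := List.idxOf_lt_length_iff.2 h
  rw [List.getElem?_eq_getElem hl, List.getElem_idxOf hl]

theorem prevOcc_indexOf (b0 : ℕ) (v : List PSym) (h : PSym.p b0 ∈ v) :
    prevOcc v (v.idxOf (PSym.p b0)) = none := by
  rw [prevOcc_eq_none_iff]
  intro j hj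
  rw [getElem?_indexOf h]
  exact indexOf_min hj

theorem penc_cons_s (x : ℕ) (v : List PSym) : penc (PSym.s x :: v) = Enc.s x :: penc v := by
  apply List.ext_getElem
  · simp [penc_length]
  · intro i h1 h2
    rcases i with _ | i
    · rw [penc_getElem _ 0 (by simp), pencSym_zero_s]; rfl
    · rw [penc_getElem _ (i+1) (by simpa [penc_length] using h1)]
      have hi : i < v.length := by simp [penc_length] at h1; omega
      rw [pencSym_cons_succ_other _ _ _ hi (by rintro ⟨_, _, b0, hc⟩; cases hc)]
      simp only [List.getElem_cons_succ]
      rw [penc_getElem _ i hi]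

theorem penc_cons_p_not_mem (b0 : ℕ) (v : List PSym) (h : PSym.p b0 ∉ v) :
    penc (PSym.p b0 :: v) = Enc.inf :: penc v := by
  apply List.ext_getElem
  · simp [penc_length]
  · intro i h1 h2
    rcases i with _ | i
    · rw [penc_getElem _ 0 (by simp), pencSym_zero_p]; rfl
    · rw [penc_getElem _ (i+1) (by simpa [penc_length] using h1)]
      have hi : i < v.length := by simp [penc_length] at h1; omega
      rw [pencSym_cons_succ_other _ _ _ hi ?_]
      · simp only [List.getElem_cons_succ]
        rw [penc_getElem _ i hi]
      · rintro ⟨hv, _, _⟩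
        exact h (List.mem_of_getElem? hv)

theorem penc_cons_p_mem (b0 : ℕ) (v : List PSym) (h : PSym.p b0 ∈ v) :
    penc (PSym.p b0 :: v) =
      Enc.inf :: (penc v).set (v.idxOf (PSym.p b0)) (Enc.fin (v.idxOf (PSym.p b0) + 1)) := by
  set k := v.idxOf (PSym.p b0) with hk
  have hkl : k < v.length := List.idxOf_lt_length_iff.2 h
  apply List.ext_getElem
  · simp [penc_length]
  · intro i h1 h2
    rcases i with _ | i
    · rw [penc_getElem _ 0 (by simp), pencSym_zero_p]; rfl
    · rw [penc_getElem _ (i+1) (by simpa [penc_length] using h1)]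
      have hi : i < v.length := by simp [penc_length] at h1; omega
      simp only [List.getElem_cons_succ]
      by_cases hik : i = k
      · subst hik
        rw [pencSym_cons_succ_first b0 v k (by rw [hk]; exact getElem?_indexOf h)
          (by rw [hk]; exact prevOcc_indexOf b0 v h)]
        rw [List.getElem_set_self (by simpa [penc_length])]
      · rw [pencSym_cons_succ_other _ _ _ hi ?_]
        · rw [List.getElem_set_ne (by omega), penc_getElem _ i hi]
        · rintro ⟨hv, hp, _⟩
          apply hik
          -- i is an occurrence of p b0 with no previous occurrence ⇒ i = indexOf
          have : ¬ (k < i) := by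
            intro hlt
            exact (prevOcc_eq_none_iff.1 hp k hlt) (by rw [getElem?_indexOf h, hv])
          have : ¬ (i < k) := by
            intro hlt
            exact indexOf_min (hk ▸ hlt) hv
          omega

theorem prevOcc_take (u : List PSym) (j i : ℕ) (hij : i < j) :
    prevOcc (u.take j) i = prevOcc u i := by
  unfold prevOcc
  congr 1
  apply List.filter_congr
  intro x hx
  rw [List.mem_range] at hx
  rw [List.getElem?_take, List.getElem?_take, if_pos (by omega), if_pos hij]

theorem penc_take (u : List PSym) (j : ℕ) : penc (u.take j) = (penc u).take j := by
  apply List.ext_getElem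
  · simp [penc_length]
  · intro i h1 h2
    have hil : i < u.length := by simp [penc_length] at h1; omega
    have hij : i < j := by simp [penc_length] at h1; omega
    rw [penc_getElem _ i (by simpa [penc_length] using h1),
      List.getElem_take, penc_getElem _ i hil]
    unfold pencSym
    rw [List.getElem?_take, if_pos hij, prevOcc_take u j i hij]


theorem mem_pList {v : List PSym} {b0 : ℕ} :
    b0 ∈ (v.filterMap (fun s => match s with | PSym.p a => some a | PSym.s _ => none)) ↔
      PSym.p b0 ∈ v := by
  rw [List.mem_filterMap]
  constructor
  · rintro ⟨x, hx, hm⟩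
    rcases x with x | x <;> simp_all
  · intro h; exact ⟨PSym.p b0, h, rfl⟩

theorem distinctP_cons_s (x : ℕ) (v : List PSym) : distinctP (PSym.s x :: v) = distinctP v := by
  simp [distinctP]

theorem distinctP_cons_p_mem (b0 : ℕ) (v : List PSym) (h : PSym.p b0 ∈ v) :
    distinctP (PSym.p b0 :: v) = distinctP v := by
  unfold distinctP
  rw [List.filterMap_cons]
  simp only
  rw [List.dedup_cons_of_mem (mem_pList.2 h)]

theorem distinctP_cons_p_not_mem (b0 : ℕ) (v : List PSym) (h : PSym.p b0 ∉ v) :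
    distinctP (PSym.p b0 :: v) = distinctP v + 1 := by
  unfold distinctP
  rw [List.filterMap_cons]
  simp only
  rw [List.dedup_cons_of_notMem (fun hc => h (mem_pList.1 hc))]
  simp [Nat.add_comm]

theorem pencSym_indexOf_eq_inf (b0 : ℕ) (v : List PSym) (h : PSym.p b0 ∈ v) :
    pencSym v (v.idxOf (PSym.p b0)) = Enc.inf := by
  unfold pencSym
  rw [getElem?_indexOf h, prevOcc_indexOf b0 v h]

theorem distinctP_eq_count_inf (u : List PSym) : distinctP u = (penc u).count Enc.inf := by
  induction u with
  | nil => simp [distinctP, penc]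
  | cons b v ih =>
    rcases b with x | b0
    · rw [penc_cons_s, distinctP_cons_s, ih, List.count_cons]
      simp
    · by_cases h : PSym.p b0 ∈ v
      · rw [penc_cons_p_mem b0 v h, distinctP_cons_p_mem b0 v h, ih, List.count_cons]
        set k := v.idxOf (PSym.p b0) with hk
        have hkl : k < (penc v).length := by
          rw [penc_length]; exact List.idxOf_lt_length_iff.2 h
        rw [List.count_set hkl]
        have : (penc v)[k] = Enc.inf := by
          rw [penc_getElem _ k (by simpa [penc_length] using hkl), hk]
          exact pencSym_indexOf_eq_inf b0 v h
        rw [this]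
        have hpos : 0 < (penc v).count Enc.inf := by
          rw [List.count_pos_iff]
          exact this ▸ List.getElem_mem hkl
        simp only [beq_self_eq_true, if_true]
        have : (Enc.fin (k+1) == Enc.inf) = false := by rfl
        rw [this]
        simp
        omega
      · rw [penc_cons_p_not_mem b0 v h, distinctP_cons_p_not_mem b0 v h, ih, List.count_cons]
        simp [Nat.add_comm]


theorem fce_cons_s (x : ℕ) (v : List PSym) : fce (PSym.s x :: v) = Enc.s x := rfl

theorem fce_cons_p (b0 : ℕ) (v : List PSym) :
    fce (PSym.p b0 :: v) = Enc.fin (fceRank (PSym.p b0 :: v)) := rfl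

theorem mem_take_indexOf_succ (b0 : ℕ) (v : List PSym) (h : PSym.p b0 ∈ v) :
    PSym.p b0 ∈ v.take (v.idxOf (PSym.p b0) + 1) := by
  have hkl : v.idxOf (PSym.p b0) < v.length := List.idxOf_lt_length_iff.2 h
  have : (v.take (v.idxOf (PSym.p b0) + 1))[v.idxOf (PSym.p b0)]? = some (PSym.p b0) := by
    rw [List.getElem?_take, if_pos (by omega)]
    exact getElem?_indexOf h
  exact List.mem_of_getElem? this

theorem fce_cons_p_mem (b0 : ℕ) (v : List PSym) (h : PSym.p b0 ∈ v) :
    fce (PSym.p b0 :: v) = Enc.fin (distinctP (v.take (v.idxOf (PSym.p b0) + 1))) := by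
  rw [fce_cons_p]
  congr 1
  simp only [fceRank]
  set k := v.idxOf (PSym.p b0) with hk
  have hkl : k < v.length := List.idxOf_lt_length_iff.2 h
  have hmin : min (PSym.p b0 :: v).length (2 + k) = k + 2 := by
    simp only [List.length_cons]; omega
  rw [hmin]
  have : (PSym.p b0 :: v).take (k + 2) = PSym.p b0 :: v.take (k+1) := by
    rfl
  rw [this, distinctP_cons_p_mem _ _ (mem_take_indexOf_succ b0 v h)]

theorem fce_cons_p_not_mem (b0 : ℕ) (v : List PSym) (h : PSym.p b0 ∉ v) :
    fce (PSym.p b0 :: v) = Enc.fin (distinctP v + 1) := by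
  rw [fce_cons_p]
  congr 1
  simp only [fceRank]
  rw [List.idxOf_of_notMem h]
  have hmin : min (PSym.p b0 :: v).length (2 + v.length) = v.length + 1 := by
    simp only [List.length_cons]; omega
  rw [hmin, List.take_of_length_le (by simp), distinctP_cons_p_not_mem _ _ h]

theorem countInf_take_lt {l : List Enc} {i j : ℕ} (hj : j < l.length)
    (hl : l[j] = Enc.inf) (hij : i ≤ j) :
    (l.take i).count Enc.inf < (l.take (j+1)).count Enc.inf := by
  have h1 : l.take (j+1) = l.take j ++ [Enc.inf] := by
    rw [List.take_succ, List.getElem?_eq_getElem hj, hl]; rfl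
  rw [h1, List.count_append]
  have h2 : l.take i = (l.take j).take i := by rw [List.take_take, min_eq_left hij]
  have h3 : (l.take i).count Enc.inf ≤ (l.take j).count Enc.inf := by
    rw [h2]
    exact (List.take_sublist _ _).count_le _
  simp only [List.count_singleton]
  simp
  omega

theorem fce_cons_p_mem_count (b0 : ℕ) (v : List PSym) (h : PSym.p b0 ∈ v) :
    fce (PSym.p b0 :: v) =
      Enc.fin (((penc v).take (v.idxOf (PSym.p b0) + 1)).count Enc.inf) := by
  rw [fce_cons_p_mem b0 v h, distinctP_eq_count_inf, penc_take]

theorem penc_getElem_indexOf_inf (b0 : ℕ) (v : List PSym) (h : PSym.p b0 ∈ v) :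
    (penc v)[v.idxOf (PSym.p b0)]'(by
      rw [penc_length]; exact List.idxOf_lt_length_iff.2 h) = Enc.inf := by
  rw [penc_getElem _ _ (List.idxOf_lt_length_iff.2 h)]
  exact pencSym_indexOf_eq_inf b0 v h

theorem key (w v : List PSym) (a : ℕ) (b : PSym) (ha : PSym.p a ∈ w) :
    penc (PSym.p a :: w) <+: penc (b :: v) ↔
      (penc w <+: penc v ∧ fce (b :: v) = fce (PSym.p a :: w)) := by
  set k := w.idxOf (PSym.p a) with hk
  have hkm : k < w.length := List.idxOf_lt_length_iff.2 ha
  have hWlen : (penc w).length = w.length := penc_length w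
  have hVlen : (penc v).length = v.length := penc_length v
  set W' : List Enc := (penc w).set k (Enc.fin (k+1)) with hW'
  have hpaw : penc (PSym.p a :: w) = Enc.inf :: W' := penc_cons_p_mem a w ha
  have hW'len : W'.length = w.length := by rw [hW', List.length_set, hWlen]
  have hwk_inf : (penc w)[k]'(by omega) = Enc.inf := penc_getElem_indexOf_inf a w ha
  have hfw : fce (PSym.p a :: w) = Enc.fin (((penc w).take (k+1)).count Enc.inf) :=
    fce_cons_p_mem_count a w ha
  constructor
  · intro h
    rw [hpaw] at h
    rcases b with x | b0
    · rw [penc_cons_s] at h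
      rcases List.cons_prefix_cons.1 h with ⟨hc, -⟩
      cases hc
    by_cases hbv : PSym.p b0 ∈ v
    · set k' := v.idxOf (PSym.p b0) with hk'
      have hk'v : k' < v.length := List.idxOf_lt_length_iff.2 hbv
      rw [penc_cons_p_mem b0 v hbv] at h
      have h2 : W' <+: (penc v).set k' (Enc.fin (k'+1)) := (List.cons_prefix_cons.1 h).2
      have hvlen : ((penc v).set k' (Enc.fin (k'+1))).length = v.length := by
        rw [List.length_set, hVlen]
      have hmv : w.length ≤ v.length := by
        have := h2.length_le
        rw [hW'len, hvlen] at this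
        exact this
      -- k' = k
      have hkk' : k' = k := by
        by_contra hne
        have hQk : ((penc v).set k' (Enc.fin (k'+1)))[k]'(by omega) =
            (penc v)[k]'(by omega) := List.getElem_set_ne (by omega) (by simp only [List.length_set, penc_length]; omega)
        have hWk : W'[k]'(by omega) = Enc.fin (k+1) :=
          List.getElem_set_self (by simp only [List.length_set, penc_length]; omega)
        have h3 := h2.getElem (i := k) (by omega)
        rw [hWk, hQk, penc_getElem _ _ (by omega)] at h3
        have := pencSym_fin_le h3.symm
        omega
      have hvk_inf : (penc v)[k]'(by omega) = Enc.inf := by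
        rw [penc_getElem _ _ (by omega), ← hkk', hk']
        exact pencSym_indexOf_eq_inf b0 v hbv
      -- penc w <+: penc v
      have hpw : penc w <+: penc v := by
        rw [List.prefix_iff_eq_take]
        apply List.ext_getElem
        · rw [List.length_take]; omega
        intro i h1 h2'
        rw [List.getElem_take]
        rw [hWlen] at h1
        by_cases hik : i = k
        · subst hik
          rw [hwk_inf, hvk_inf]
        · have hQi : ((penc v).set k' (Enc.fin (k'+1)))[i]'(by omega) =
              (penc v)[i]'(by omega) := List.getElem_set_ne (by omega) (by simp only [List.length_set, penc_length]; omega)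
          have hWi : W'[i]'(by omega) = (penc w)[i]'(by omega) :=
            List.getElem_set_ne (by omega) (by simp only [List.length_set, penc_length]; omega)
          have h3 := h2.getElem (i := i) (by omega)
          rw [hWi, hQi] at h3
          exact h3
      refine ⟨hpw, ?_⟩
      rw [fce_cons_p_mem_count b0 v hbv, hfw, ← hk', hkk']
      congr 1
      have heq : (penc v).take (k+1) = (penc w).take (k+1) := by
        rcases hpw with ⟨t, ht⟩
        rw [← ht, List.take_append_of_le_length (by omega)]
      rw [heq]
    · rw [penc_cons_p_not_mem b0 v hbv] at h
      have h2 : W' <+: penc v := (List.cons_prefix_cons.1 h).2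
      have hmv : w.length ≤ v.length := by
        have := h2.length_le; rw [hW'len, hVlen] at this; exact this
      have h3 := h2.getElem (i := k) (by omega)
      rw [List.getElem_set_self (by simp only [List.length_set, penc_length]; omega), penc_getElem _ _ (by omega)] at h3
      have := pencSym_fin_le h3.symm
      omega
  · rintro ⟨hpw, hf⟩
    have hmv : w.length ≤ v.length := by
      have := hpw.length_le; rw [hWlen, hVlen] at this; exact this
    rcases b with x | b0
    · rw [fce_cons_s, hfw] at hf; cases hf
    by_cases hbv : PSym.p b0 ∈ v
    · set k' := v.idxOf (PSym.p b0) with hk'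
      have hk'v : k' < v.length := List.idxOf_lt_length_iff.2 hbv
      rw [fce_cons_p_mem_count b0 v hbv, hfw, ← hk'] at hf
      have heq : (penc v).take (k+1) = (penc w).take (k+1) := by
        rcases hpw with ⟨t, ht⟩
        rw [← ht, List.take_append_of_le_length (by omega)]
      have hfc : ((penc v).take (k'+1)).count Enc.inf =
          ((penc v).take (k+1)).count Enc.inf := by
        rw [heq]; exact Enc.fin.inj hf
      have hvk_inf : (penc v)[k]'(by omega) = Enc.inf := by
        rw [← hpw.getElem (i := k) (by omega)]
        exact hwk_inf
      have hvk'_inf : (penc v)[k']'(by omega) = Enc.inf := by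
        rw [penc_getElem _ _ (by omega), hk']
        exact pencSym_indexOf_eq_inf b0 v hbv
      have hkk' : k' = k := by
        by_contra hne
        rcases Nat.lt_or_ge k' k with hlt | hge
        · have := countInf_take_lt (l := penc v) (i := k'+1) (j := k)
            (by omega) hvk_inf (by omega)
          omega
        · have := countInf_take_lt (l := penc v) (i := k+1) (j := k')
            (by omega) hvk'_inf (by omega)
          omega
      rw [penc_cons_p_mem b0 v hbv, ← hk', hkk', hpaw]
      rcases hpw with ⟨t, ht⟩
      rw [← ht, List.set_append, if_pos (by omega)]
      exact ⟨t, rfl⟩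
    · rw [fce_cons_p_not_mem b0 v hbv, hfw] at hf
      have hfc := Enc.fin.inj hf
      have heq : (penc w).take (k+1) = (penc v).take (k+1) := by
        rcases hpw with ⟨t, ht⟩
        rw [← ht, List.take_append_of_le_length (by omega)]
      rw [heq] at hfc
      have hle : ((penc v).take (k+1)).count Enc.inf ≤ (penc v).count Enc.inf :=
        (List.take_sublist _ _).count_le _
      rw [← distinctP_eq_count_inf] at hle
      omega

theorem lex_append_iff (P X Y : List Enc) :
    List.Lex (· < ·) (P ++ X) (P ++ Y) ↔ List.Lex (· < ·) X Y := by
  induction P with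
  | nil => rfl
  | cons p P ih => simpa [List.cons_append, List.lex_cons_iff] using ih

theorem key2 (w v : List PSym) (a : ℕ) (b : PSym) (ha : PSym.p a ∈ w)
    (t : List Enc) (ht : penc v = penc w ++ t)
    (hf : fce (b :: v) = fce (PSym.p a :: w)) :
    penc (b :: v) = penc (PSym.p a :: w) ++ t := by
  have hpw : penc w <+: penc v := ⟨t, ht.symm⟩
  set k := w.idxOf (PSym.p a) with hk
  have hkm : k < w.length := List.idxOf_lt_length_iff.2 ha
  have hWlen : (penc w).length = w.length := penc_length w
  have hVlen : (penc v).length = v.length := penc_length v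
  have hpaw : penc (PSym.p a :: w) = Enc.inf :: (penc w).set k (Enc.fin (k+1)) :=
    penc_cons_p_mem a w ha
  have hwk_inf : (penc w)[k]'(by omega) = Enc.inf := penc_getElem_indexOf_inf a w ha
  have hfw : fce (PSym.p a :: w) = Enc.fin (((penc w).take (k+1)).count Enc.inf) :=
    fce_cons_p_mem_count a w ha
  have hmv : w.length ≤ v.length := by
    have := hpw.length_le; rw [hWlen, hVlen] at this; exact this
  rcases b with x | b0
  · rw [fce_cons_s, hfw] at hf; cases hf
  by_cases hbv : PSym.p b0 ∈ v
  · set k' := v.idxOf (PSym.p b0) with hk'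
    have hk'v : k' < v.length := List.idxOf_lt_length_iff.2 hbv
    rw [fce_cons_p_mem_count b0 v hbv, hfw, ← hk'] at hf
    have heq : (penc v).take (k+1) = (penc w).take (k+1) := by
      rw [ht, List.take_append_of_le_length (by omega)]
    have hfc : ((penc v).take (k'+1)).count Enc.inf =
        ((penc v).take (k+1)).count Enc.inf := by
      rw [heq]; exact Enc.fin.inj hf
    have hvk_inf : (penc v)[k]'(by omega) = Enc.inf := by
      rw [← hpw.getElem (i := k) (by omega)]
      exact hwk_inf
    have hvk'_inf : (penc v)[k']'(by omega) = Enc.inf := by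
      rw [penc_getElem _ _ (by omega), hk']
      exact pencSym_indexOf_eq_inf b0 v hbv
    have hkk' : k' = k := by
      by_contra hne
      rcases Nat.lt_or_ge k' k with hlt | hge
      · have := countInf_take_lt (l := penc v) (i := k'+1) (j := k)
          (by omega) hvk_inf (by omega)
        omega
      · have := countInf_take_lt (l := penc v) (i := k+1) (j := k')
          (by omega) hvk'_inf (by omega)
        omega
    rw [penc_cons_p_mem b0 v hbv, ← hk', hkk', hpaw, ht, List.set_append,
      if_pos (by omega)]
    rfl
  · rw [fce_cons_p_not_mem b0 v hbv, hfw] at hf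
    have hfc := Enc.fin.inj hf
    have heq : (penc w).take (k+1) = (penc v).take (k+1) := by
      rw [ht, List.take_append_of_le_length (by omega)]
    rw [heq] at hfc
    have hle : ((penc v).take (k+1)).count Enc.inf ≤ (penc v).count Enc.inf :=
      (List.take_sublist _ _).count_le _
    rw [← distinctP_eq_count_inf] at hle
    omega

theorem ord (w v1 v2 : List PSym) (a : ℕ) (b1 b2 : PSym) (ha : PSym.p a ∈ w)
    (h1 : penc w <+: penc v1) (h2 : penc w <+: penc v2)
    (hf1 : fce (b1 :: v1) = fce (PSym.p a :: w))
    (hf2 : fce (b2 :: v2) = fce (PSym.p a :: w))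
    (hlt : List.Lex (· < ·) (penc v1) (penc v2)) :
    List.Lex (· < ·) (penc (b1 :: v1)) (penc (b2 :: v2)) := by
  rcases h1 with ⟨t1, ht1⟩
  rcases h2 with ⟨t2, ht2⟩
  rw [key2 w v1 a b1 ha t1 ht1.symm hf1, key2 w v2 a b2 ha t2 ht2.symm hf2]
  rw [lex_append_iff]
  rw [← ht1, ← ht2, lex_append_iff] at hlt
  exact hlt


theorem stmt18 (T : List PSym) (n : ℕ) (hn : n = T.length)
    -- `$` (modelled as `PSym.s 0`, the smallest symbol) is the end-marker of `T`
    (hend : T.getLast? = some (PSym.s 0))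
    (huniq : ∀ i, i + 1 < n → T[i]? ≠ some (PSym.s 0))
    -- `Rinv i` is the (0-based) starting position of the lexicographically
    -- (i+1)-st p-encoded suffix of `T`
    (Rinv : ℕ → ℕ) (hdom : ∀ i < n, Rinv i < n)
    (hsorted : ∀ i j, i < j → j < n →
      lexLt (penc (T.drop (Rinv i))) (penc (T.drop (Rinv j))))
    -- `R` is the rank function, the inverse of `Rinv`
    (R : ℕ → ℕ) (hRdom : ∀ p < n, R p < n)
    (hRinv : ∀ i < n, R (Rinv i) = i) (hR : ∀ p < n, Rinv (R p) = p)
    -- the pBWT array `L`:  L i = fce (T[R⁻¹(i)−1..])  (with T[0..] := $)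
    (L : ℕ → Enc)
    (hL : ∀ i < n, L i = fce (if Rinv i = 0 then [PSym.s 0] else T.drop (Rinv i - 1)))
    -- the LF-mapping
    (LF : ℕ → ℕ)
    (hLF : ∀ i < n, LF i = if Rinv i = 0 then R (n - 1) else R (Rinv i - 1))
    -- a p-symbol c occurring in w
    (w : List PSym) (a : ℕ) (hocc : PSym.p a ∈ w)
    -- [l..r] is the w-interval: the maximal interval of ranks whose
    -- p-encoded suffixes are prefixed by ⟨w⟩
    (l r : ℕ) (hr : r < n)
    (hwint : ∀ q < n, (l ≤ q ∧ q ≤ r ↔ penc w <+: penc (T.drop (Rinv q))))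
    -- [l'..r'] is the cw-interval
    (l' r' : ℕ) (hr' : r' < n)
    (hcwint : ∀ q < n,
      (l' ≤ q ∧ q ≤ r' ↔ penc (PSym.p a :: w) <+: penc (T.drop (Rinv q))))
    -- l'' and r'' are the first and last positions in [l..r]
    -- with L-value fce(cw)
    (l'' r'' : ℕ)
    (hl1 : l ≤ l'') (hl2 : l'' ≤ r) (hl3 : L l'' = fce (PSym.p a :: w))
    (hl4 : ∀ q, l ≤ q → q ≤ r → L q = fce (PSym.p a :: w) → l'' ≤ q)
    (hr1 : l ≤ r'') (hr2 : r'' ≤ r) (hr3 : L r'' = fce (PSym.p a :: w))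
    (hr4 : ∀ q, l ≤ q → q ≤ r → L q = fce (PSym.p a :: w) → q ≤ r'') :
    (∀ p < n,
      (l' ≤ LF p ∧ LF p ≤ r') ↔ (l ≤ p ∧ p ≤ r ∧ L p = fce (PSym.p a :: w))) ∧
    l' = LF l'' ∧ r' = LF r'' := by
  have hTne : T ≠ [] := by
    intro hT
    rw [hT] at hend
    cases hend
  have hn1 : 1 ≤ n := by
    rw [hn]
    exact List.length_pos_iff.2 hTne
  have hwne : 1 ≤ w.length := List.length_pos_iff.2 (List.ne_nil_of_mem hocc)
  have hfcefin : fce (PSym.p a :: w) = Enc.fin (fceRank (PSym.p a :: w)) := rfl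
  -- the main equivalence
  have main : ∀ p < n,
      ((l' ≤ LF p ∧ LF p ≤ r') ↔ (l ≤ p ∧ p ≤ r ∧ L p = fce (PSym.p a :: w))) := by
    intro p hp
    have hRp : Rinv p < n := hdom p hp
    by_cases h0 : Rinv p = 0
    · -- previous suffix is the empty suffix; both sides are false
      have hLp : L p = Enc.s 0 := by rw [hL p hp, if_pos h0]; rfl
      have hLF0 : LF p = R (n - 1) := by rw [hLF p hp, if_pos h0]
      have hLFn : LF p < n := by rw [hLF0]; exact hRdom _ (by omega)
      have hRLF : Rinv (LF p) = n - 1 := by rw [hLF0]; exact hR _ (by omega)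
      constructor
      · intro hcw
        exfalso
        have hpre := (hcwint (LF p) hLFn).1 hcw
        rw [hRLF] at hpre
        have hlen := hpre.length_le
        rw [penc_length, penc_length, List.length_drop, ← hn] at hlen
        simp only [List.length_cons] at hlen
        omega
      · rintro ⟨-, -, hLq⟩
        rw [hLp, hfcefin] at hLq
        cases hLq
    · -- previous suffix is T.drop (Rinv p - 1)
      set j := Rinv p - 1 with hj
      have hjn : j < n := by omega
      have hjT : j < T.length := by omega
      have hLFp : LF p = R j := by rw [hLF p hp, if_neg h0]
      have hLFn : LF p < n := by rw [hLFp]; exact hRdom _ hjn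
      have hRLF : Rinv (LF p) = j := by rw [hLFp]; exact hR _ hjn
      have hdropj : T.drop j = T[j] :: T.drop (Rinv p) := by
        have h1 := List.getElem_cons_drop hjT
        have h2 : j + 1 = Rinv p := by omega
        rw [h2] at h1
        exact h1.symm
      have hcw := hcwint (LF p) hLFn
      rw [hRLF, hdropj, key w (T.drop (Rinv p)) a (T[j]'hjT) hocc] at hcw
      have hLp : L p = fce (T[j]'hjT :: T.drop (Rinv p)) := by
        rw [hL p hp, if_neg h0, ← hj, hdropj]
      rw [hcw, ← hwint p hp, hLp, and_assoc]
  -- surjectivity of LF onto [0, n)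
  have surj : ∀ y < n, ∃ q, q < n ∧ LF q = y := by
    intro y hy
    have hty : Rinv y < n := hdom y hy
    by_cases ht : Rinv y = n - 1
    · refine ⟨R 0, hRdom 0 (by omega), ?_⟩
      have h1 : Rinv (R 0) = 0 := hR 0 (by omega)
      rw [hLF (R 0) (hRdom 0 (by omega)), if_pos h1, ← ht]
      exact hRinv y hy
    · refine ⟨R (Rinv y + 1), hRdom _ (by omega), ?_⟩
      have h1 : Rinv (R (Rinv y + 1)) = Rinv y + 1 := hR _ (by omega)
      rw [hLF _ (hRdom _ (by omega)), if_neg (by omega), h1]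
      have h2 : Rinv y + 1 - 1 = Rinv y := by omega
      rw [h2]
      exact hRinv y hy
  -- monotonicity of LF on positions in the w-interval with L-value fce (c w)
  have mono : ∀ q1 q2, q1 < n → q2 < n → q1 < q2 →
      (l ≤ q1 ∧ q1 ≤ r ∧ L q1 = fce (PSym.p a :: w)) →
      (l ≤ q2 ∧ q2 ≤ r ∧ L q2 = fce (PSym.p a :: w)) → LF q1 < LF q2 := by
    intro q1 q2 hq1 hq2 h12 hS1 hS2
    have hnz : ∀ q, q < n → L q = fce (PSym.p a :: w) → Rinv q ≠ 0 := by
      intro q hq hLq h0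
      rw [hL q hq, if_pos h0] at hLq
      rw [hfcefin] at hLq
      cases hLq
    have h01 := hnz q1 hq1 hS1.2.2
    have h02 := hnz q2 hq2 hS2.2.2
    have hd1 : Rinv q1 < n := hdom q1 hq1
    have hd2 : Rinv q2 < n := hdom q2 hq2
    have hj1T : Rinv q1 - 1 < T.length := by omega
    have hj2T : Rinv q2 - 1 < T.length := by omega
    have hdrop1 : T.drop (Rinv q1 - 1) = T[Rinv q1 - 1]'hj1T :: T.drop (Rinv q1) := by
      have h1 := List.getElem_cons_drop hj1T
      have h2 : Rinv q1 - 1 + 1 = Rinv q1 := by omega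
      rw [h2] at h1
      exact h1.symm
    have hdrop2 : T.drop (Rinv q2 - 1) = T[Rinv q2 - 1]'hj2T :: T.drop (Rinv q2) := by
      have h1 := List.getElem_cons_drop hj2T
      have h2 : Rinv q2 - 1 + 1 = Rinv q2 := by omega
      rw [h2] at h1
      exact h1.symm
    have hpw1 : penc w <+: penc (T.drop (Rinv q1)) := (hwint q1 hq1).1 ⟨hS1.1, hS1.2.1⟩
    have hpw2 : penc w <+: penc (T.drop (Rinv q2)) := (hwint q2 hq2).1 ⟨hS2.1, hS2.2.1⟩
    have hf1 : fce (T[Rinv q1 - 1]'hj1T :: T.drop (Rinv q1)) = fce (PSym.p a :: w) := by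
      rw [← hdrop1, ← (by rw [hL q1 hq1, if_neg h01] : L q1 = fce (T.drop (Rinv q1 - 1)))]
      exact hS1.2.2
    have hf2 : fce (T[Rinv q2 - 1]'hj2T :: T.drop (Rinv q2)) = fce (PSym.p a :: w) := by
      rw [← hdrop2, ← (by rw [hL q2 hq2, if_neg h02] : L q2 = fce (T.drop (Rinv q2 - 1)))]
      exact hS2.2.2
    have hlt : List.Lex (· < ·) (penc (T.drop (Rinv q1))) (penc (T.drop (Rinv q2))) :=
      hsorted q1 q2 h12 hq2
    have hord := ord w (T.drop (Rinv q1)) (T.drop (Rinv q2)) a _ _ hocc hpw1 hpw2 hf1 hf2 hlt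
    rw [← hdrop1, ← hdrop2] at hord
    have hLF1 : LF q1 = R (Rinv q1 - 1) := by rw [hLF q1 hq1, if_neg h01]
    have hLF2 : LF q2 = R (Rinv q2 - 1) := by rw [hLF q2 hq2, if_neg h02]
    have hR1 : Rinv (LF q1) = Rinv q1 - 1 := by rw [hLF1]; exact hR _ (by omega)
    have hR2 : Rinv (LF q2) = Rinv q2 - 1 := by rw [hLF2]; exact hR _ (by omega)
    by_contra hc
    push_neg at hc
    rcases Nat.lt_or_ge (LF q2) (LF q1) with hlt2 | hge
    · have hlt3 := hsorted (LF q2) (LF q1) hlt2 (by rw [hLF1]; exact hRdom _ (by omega))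
      rw [hR1, hR2] at hlt3
      exact asymm hord hlt3
    · have heq : LF q1 = LF q2 := by omega
      have : Rinv q1 - 1 = Rinv q2 - 1 := by rw [← hR1, ← hR2, heq]
      rw [this] at hord
      exact irrefl _ hord
  refine ⟨main, ?_, ?_⟩
  · -- l' = LF l''
    have hl''n : l'' < n := lt_of_le_of_lt hl2 hr
    have h1 := (main l'' hl''n).2 ⟨hl1, hl2, hl3⟩
    have hl'n : l' < n := by omega
    obtain ⟨q, hqn, hq⟩ := surj l' hl'n
    have hq' := (main q hqn).1 (by rw [hq]; exact ⟨le_refl l', by omega⟩)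
    have hlq : l'' ≤ q := hl4 q hq'.1 hq'.2.1 hq'.2.2
    rcases Nat.lt_or_ge l'' q with hlt | hge
    · have := mono l'' q hl''n hqn hlt ⟨hl1, hl2, hl3⟩ hq'
      omega
    · have : l'' = q := by omega
      rw [← hq, this]
  · -- r' = LF r''
    have hr''n : r'' < n := lt_of_le_of_lt hr2 hr
    have h1 := (main r'' hr''n).2 ⟨hr1, hr2, hr3⟩
    have hr'n : r' < n := hr'
    obtain ⟨q, hqn, hq⟩ := surj r' hr'n
    have hq' := (main q hqn).1 (by rw [hq]; exact ⟨by omega, le_refl r'⟩)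
    have hrq : q ≤ r'' := hr4 q hq'.1 hq'.2.1 hq'.2.2
    rcases Nat.lt_or_ge q r'' with hlt | hge
    · have := mono q r'' hqn hr''n hlt hq' ⟨hr1, hr2, hr3⟩
      omega
    · have : q = r'' := by omega
      rw [← hq, this]
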